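/- Let p be a probability density with respect to a σ-finite measure μ, let s : X → ℝ be measurable, and let β ≥ 0 satisfy Z(β) := E_{X∼p}[exp(β s(X))] < ∞. Then for every probability density q absolutely continuous with respect to p with E_q[s(X)] ≥ m, one has KL(q‖p) ≥ β m − log Z(β); equality for a given q with E_q[s(X)] = m holds if and only if q equals the exponentially tilted density q_β(x) = p(x) exp(β s(x))/Z(β) p-almost everywhere. -/

import Mathlib

open MeasureTheory Real Set
open scoped Classical

/-- KL divergence between densities `q` and `p` w.r.t. a common dominating measure `μ`,
valued in `EReal`, set to `⊤` when `q` is not absolutely continuous w.r.t. `p`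
(or when the defining integrand fails to be integrable). -/
noncomputable def KLd {α : Type*} [MeasurableSpace α] (μ : Measure α) (q p : α → ℝ) : EReal :=
  if (∀ᵐ x ∂μ, p x = 0 → q x = 0) ∧
      Integrable (fun x => q x * Real.log (q x / p x)) μ then
    ((∫ x, q x * Real.log (q x / p x) ∂μ : ℝ) : EReal)
  else ⊤

/-- `p` is a probability density with respect to `μ`. -/
def IsProbDensity {α : Type*} [MeasurableSpace α] (μ : Measure α) (p : α → ℝ) : Prop :=
  Measurable p ∧ (∀ x, 0 ≤ p x) ∧ ∫ x, p x ∂μ = 1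

/-- Elementary inequality: for `a, b ≥ 0` with `b = 0 → a = 0`,
`a - b ≤ a log(a/b)`, with equality iff `a = b`. -/
lemma KL_pt_ineq {a b : ℝ} (ha : 0 ≤ a) (hb : 0 ≤ b) (hab : b = 0 → a = 0) :
    a - b ≤ a * Real.log (a / b) ∧ (a * Real.log (a / b) = a - b ↔ a = b) := by
  rcases hb.eq_or_lt with hb0 | hb0
  · have ha0 := hab hb0.symm
    simp [ha0, ← hb0]
  rcases ha.eq_or_lt with ha0 | ha0
  · refine ⟨by simp [← ha0]; linarith, ?_⟩
    constructor
    · intro h; simp [← ha0] at h ⊢; linarith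
    · intro h; simp [← ha0] at h ⊢; linarith
  · have hba : 0 < b / a := div_pos hb0 ha0
    have hlog : Real.log (a / b) = - Real.log (b / a) := by
      rw [← Real.log_inv, inv_div]
    have key : a * (b / a - 1) = b - a := by field_simp
    constructor
    · have h1 := mul_le_mul_of_nonneg_left (Real.log_le_sub_one_of_pos hba) ha0.le
      rw [hlog]; nlinarith
    · constructor
      · intro h
        by_contra hne
        have hne' : b / a ≠ 1 := by
          intro h'
          rw [div_eq_one_iff_eq (ne_of_gt ha0)] at h'
          exact hne h'.symm
        have h2 := mul_lt_mul_of_pos_left (Real.log_lt_sub_one_of_pos hba hne') ha0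
        rw [hlog] at h; nlinarith
      · intro h
        subst h
        rw [div_self (ne_of_gt ha0), Real.log_one]
        ring

/-- The exponentially tilted density with (given) normalizing constant `Z`. -/
noncomputable def tiltD {α : Type*} (p s : α → ℝ) (β Z : ℝ) (x : α) : ℝ :=
  p x * Real.exp (β * s x) / Z

lemma KL_integrable_of_prob {α : Type*} [MeasurableSpace α] {μ : Measure α} {q : α → ℝ}
    (hq : IsProbDensity μ q) : Integrable q μ := by
  by_contra h
  have := hq.2.2
  rw [integral_undef h] at this
  norm_num at this

/-- Core decomposition: `∫ q log(q/p) = ∫ g + β ∫ s q − log Z` where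
`g = q log(q/r) − (q − r)` with `r` the tilted density; also `g` integrable and `g ≥ 0` a.e. -/
lemma KL_core {α : Type*} [MeasurableSpace α] {μ : Measure α}
    {p s q : α → ℝ} {β Z : ℝ}
    (hp : IsProbDensity μ p) (hq : IsProbDensity μ q)
    (hqp : ∀ᵐ x ∂μ, p x = 0 → q x = 0)
    (hZpos : 0 < Z)
    (hZint : Integrable (fun x => p x * Real.exp (β * s x)) μ)
    (hZval : ∫ x, p x * Real.exp (β * s x) ∂μ = Z)
    (hsq : Integrable (fun x => s x * q x) μ)
    (hint : Integrable (fun x => q x * Real.log (q x / p x)) μ) :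
    Integrable (fun x => q x * Real.log (q x / tiltD p s β Z x) - (q x - tiltD p s β Z x)) μ ∧
    (∀ᵐ x ∂μ, 0 ≤ q x * Real.log (q x / tiltD p s β Z x) - (q x - tiltD p s β Z x)) ∧
    ∫ x, q x * Real.log (q x / p x) ∂μ
      = (∫ x, (q x * Real.log (q x / tiltD p s β Z x) - (q x - tiltD p s β Z x)) ∂μ)
        + β * ∫ x, s x * q x ∂μ - Real.log Z := by
  have hrx : ∀ x, tiltD p s β Z x = p x * Real.exp (β * s x) / Z := fun x => rfl
  have hq_int : Integrable q μ := KL_integrable_of_prob hq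
  have hr_int : Integrable (fun x => tiltD p s β Z x) μ := hZint.div_const Z
  have hr1 : ∫ x, tiltD p s β Z x ∂μ = 1 := by
    simp only [tiltD]
    rw [integral_div, hZval, div_self (ne_of_gt hZpos)]
  have hae : ∀ᵐ x ∂μ, q x * Real.log (q x / p x)
      = (q x * Real.log (q x / tiltD p s β Z x) - (q x - tiltD p s β Z x))
        + ((q x - tiltD p s β Z x) + (β * (s x * q x) - Real.log Z * q x)) := by
    filter_upwards [hqp] with x hx
    rcases eq_or_ne (p x) 0 with hp0 | hp0
    · have hq0 := hx hp0
      simp [hq0, hrx, hp0]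
    · have hppos : 0 < p x := (hp.2.1 x).lt_of_ne (Ne.symm hp0)
      have hrpos : 0 < tiltD p s β Z x := by rw [hrx]; positivity
      rcases eq_or_ne (q x) 0 with hq0 | hq0
      · simp [hq0]
      · have e1 : Real.log (q x / p x) = Real.log (q x) - Real.log (p x) :=
          Real.log_div hq0 hp0
        have e2 : Real.log (q x / tiltD p s β Z x)
            = Real.log (q x) - Real.log (tiltD p s β Z x) :=
          Real.log_div hq0 (ne_of_gt hrpos)
        have e3 : Real.log (tiltD p s β Z x) = Real.log (p x) + β * s x - Real.log Z := by
          rw [hrx, Real.log_div (by positivity) (ne_of_gt hZpos),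
            Real.log_mul hp0 (Real.exp_ne_zero _), Real.log_exp]
        rw [e1, e2, e3]; ring
  have hC1 : Integrable (fun x => β * (s x * q x)) μ := hsq.const_mul β
  have hC2 : Integrable (fun x => Real.log Z * q x) μ := hq_int.const_mul _
  have hql_r : Integrable (fun x => q x * Real.log (q x / tiltD p s β Z x)) μ := by
    have heq : (fun x => q x * Real.log (q x / tiltD p s β Z x)) =ᵐ[μ]
        fun x => q x * Real.log (q x / p x) - β * (s x * q x) + Real.log Z * q x := by
      filter_upwards [hae] with x hx
      linarith
    have hD : Integrable
        (fun x => q x * Real.log (q x / p x) - β * (s x * q x) + Real.log Z * q x) μ :=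
      (hint.sub hC1).add hC2
    exact hD.congr heq.symm
  have hg_int : Integrable
      (fun x => q x * Real.log (q x / tiltD p s β Z x) - (q x - tiltD p s β Z x)) μ :=
    hql_r.sub (hq_int.sub hr_int)
  refine ⟨hg_int, ?_, ?_⟩
  · filter_upwards [hqp] with x hx
    have hr0 : tiltD p s β Z x = 0 → q x = 0 := by
      intro h
      rw [hrx] at h
      rcases div_eq_zero_iff.mp h with h' | h'
      · rcases mul_eq_zero.mp h' with h'' | h''
        · exact hx h''
        · exact absurd h'' (Real.exp_ne_zero _)
      · exact absurd h' (ne_of_gt hZpos)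
    have := (KL_pt_ineq (hq.2.1 x)
      (by rw [hrx]; exact div_nonneg (mul_nonneg (hp.2.1 x) (Real.exp_pos _).le) hZpos.le)
      hr0).1
    linarith
  · have hB : Integrable (fun x => q x - tiltD p s β Z x) μ := hq_int.sub hr_int
    have hC : Integrable (fun x => β * (s x * q x) - Real.log Z * q x) μ := hC1.sub hC2
    have hBC : Integrable
        (fun x => (q x - tiltD p s β Z x) + (β * (s x * q x) - Real.log Z * q x)) μ :=
      hB.add hC
    have IB : ∫ x, (q x - tiltD p s β Z x) ∂μ = 0 := by
      rw [integral_sub hq_int hr_int, hq.2.2, hr1]; ring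
    have IC : ∫ x, (β * (s x * q x) - Real.log Z * q x) ∂μ
        = β * ∫ x, s x * q x ∂μ - Real.log Z := by
      rw [integral_sub hC1 hC2, integral_const_mul, integral_const_mul, hq.2.2]
      ring
    rw [integral_congr_ae hae, integral_add hg_int hBC, integral_add hB hC, IB, IC]
    ring

/-- Characterization of when the nonnegative integrand `g` vanishes a.e. -/
lemma KL_g_zero_iff {α : Type*} [MeasurableSpace α] {μ : Measure α}
    {p s q : α → ℝ} {β Z : ℝ}
    (hp : IsProbDensity μ p) (hq : IsProbDensity μ q)
    (hqp : ∀ᵐ x ∂μ, p x = 0 → q x = 0) (hZpos : 0 < Z) :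
    ((fun x => q x * Real.log (q x / tiltD p s β Z x) - (q x - tiltD p s β Z x)) =ᵐ[μ]
      (0 : α → ℝ))
    ↔ (∀ᵐ x ∂μ, p x ≠ 0 → q x = tiltD p s β Z x) := by
  have hrx : ∀ x, tiltD p s β Z x = p x * Real.exp (β * s x) / Z := fun x => rfl
  have hr0 : ∀ x, (p x = 0 → q x = 0) → (tiltD p s β Z x = 0 → q x = 0) := by
    intro x hx h
    rw [hrx] at h
    rcases div_eq_zero_iff.mp h with h' | h'
    · rcases mul_eq_zero.mp h' with h'' | h''
      · exact hx h''
      · exact absurd h'' (Real.exp_ne_zero _)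
    · exact absurd h' (ne_of_gt hZpos)
  constructor
  · intro hg
    filter_upwards [hg, hqp] with x hgx hx _
    simp only [Pi.zero_apply] at hgx
    have heq : q x * Real.log (q x / tiltD p s β Z x) = q x - tiltD p s β Z x := by
      linarith
    exact (KL_pt_ineq (hq.2.1 x)
      (by rw [hrx]; exact div_nonneg (mul_nonneg (hp.2.1 x) (Real.exp_pos _).le) hZpos.le)
      (hr0 x hx)).2.mp heq
  · intro hqr
    filter_upwards [hqr, hqp] with x hx1 hx2
    simp only [Pi.zero_apply]
    have hqe : q x = tiltD p s β Z x := by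
      rcases eq_or_ne (p x) 0 with hp0 | hp0
      · rw [hx2 hp0, hrx, hp0]; simp
      · exact hx1 hp0
    rcases eq_or_ne (q x) 0 with hq0 | hq0
    · rw [hq0, ← hqe, hq0]; simp
    · rw [← hqe, div_self hq0, Real.log_one]; ring

/-- If `q` agrees a.e. with the tilted density, `q log(q/p)` has a simple a.e. form. -/
lemma KL_qlog_eq {α : Type*} [MeasurableSpace α] {μ : Measure α}
    {p s q : α → ℝ} {β Z : ℝ}
    (hp : IsProbDensity μ p) (hZpos : 0 < Z)
    (hq_eq : ∀ᵐ x ∂μ, (p x = 0 → q x = 0) ∧ (p x ≠ 0 → q x = tiltD p s β Z x)) :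
    (fun x => q x * Real.log (q x / p x)) =ᵐ[μ]
      fun x => β * (s x * q x) - Real.log Z * q x := by
  filter_upwards [hq_eq] with x hx
  rcases eq_or_ne (p x) 0 with hp0 | hp0
  · simp [hx.1 hp0]
  · have hqe : q x = p x * Real.exp (β * s x) / Z := hx.2 hp0
    have hd : q x / p x = Real.exp (β * s x) / Z := by
      rw [hqe]; field_simp
    rw [hd, Real.log_div (Real.exp_ne_zero _) (ne_of_gt hZpos), Real.log_exp]
    ring

/-- For `β ≥ 0` with `Z(β) = E_p[exp(β s)] < ∞`: every density `q ≪ p` with `E_q[s] ≥ m`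
satisfies `KL(q‖p) ≥ β m − log Z(β)`; and for `q` with `E_q[s] = m`, equality holds iff
`q` equals the tilted density `q_β = p·exp(β s)/Z(β)` `p`-almost everywhere. -/
theorem KL_lower_bound_tilted
    {α : Type*} [MeasurableSpace α] (μ : Measure α) [SigmaFinite μ]
    (p : α → ℝ) (hp : IsProbDensity μ p)
    (s : α → ℝ) (hs : Measurable s)
    (β : ℝ) (hβ : 0 ≤ β)
    (hZ : Integrable (fun x => p x * Real.exp (β * s x)) μ)
    (m : ℝ) :
    (∀ q : α → ℝ, IsProbDensity μ q → (∀ᵐ x ∂μ, p x = 0 → q x = 0) →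
        Integrable (fun x => s x * q x) μ → m ≤ ∫ x, s x * q x ∂μ →
        ((β * m - Real.log (∫ y, p y * Real.exp (β * s y) ∂μ) : ℝ) : EReal) ≤ KLd μ q p) ∧
    (∀ q : α → ℝ, IsProbDensity μ q → (∀ᵐ x ∂μ, p x = 0 → q x = 0) →
        Integrable (fun x => s x * q x) μ → ∫ x, s x * q x ∂μ = m →
        (KLd μ q p = ((β * m - Real.log (∫ y, p y * Real.exp (β * s y) ∂μ) : ℝ) : EReal) ↔
          (∀ᵐ x ∂μ, p x ≠ 0 →
            q x = p x * Real.exp (β * s x) / ∫ y, p y * Real.exp (β * s y) ∂μ))) := by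
  set Z := ∫ y, p y * Real.exp (β * s y) ∂μ with hZdef
  have hZval : ∫ x, p x * Real.exp (β * s x) ∂μ = Z := hZdef.symm
  have hZnn : 0 ≤ Z := by
    rw [← hZval]
    exact integral_nonneg fun x => mul_nonneg (hp.2.1 x) (Real.exp_pos _).le
  have hZpos : 0 < Z := by
    rcases hZnn.eq_or_lt with h0 | h
    · exfalso
      have hae0 := (integral_eq_zero_iff_of_nonneg_ae
        (Filter.Eventually.of_forall fun x =>
          mul_nonneg (hp.2.1 x) (Real.exp_pos _).le) hZ).mp (hZval.trans h0.symm)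
      have hp0 : p =ᵐ[μ] 0 := by
        filter_upwards [hae0] with x hx
        simp only [Pi.zero_apply] at hx ⊢
        rcases mul_eq_zero.mp hx with h' | h'
        · exact h'
        · exact absurd h' (Real.exp_ne_zero _)
      have : ∫ x, p x ∂μ = 0 := by rw [integral_congr_ae hp0]; simp
      rw [hp.2.2] at this
      norm_num at this
    · exact h
  constructor
  · intro q hq hqp hsq hm
    unfold KLd
    split_ifs with h
    · obtain ⟨hg_int, hg_nn, hI⟩ := KL_core hp hq hqp hZpos hZ hZval hsq h.2
      rw [EReal.coe_le_coe_iff, hI]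
      have h1 : 0 ≤ ∫ x, (q x * Real.log (q x / tiltD p s β Z x)
          - (q x - tiltD p s β Z x)) ∂μ := integral_nonneg_of_ae hg_nn
      have h2 : β * m ≤ β * ∫ x, s x * q x ∂μ := mul_le_mul_of_nonneg_left hm hβ
      linarith
    · exact le_top
  · intro q hq hqp hsq hm
    constructor
    · intro hKL
      unfold KLd at hKL
      split_ifs at hKL with h
      · obtain ⟨hg_int, hg_nn, hI⟩ := KL_core hp hq hqp hZpos hZ hZval hsq h.2
        rw [EReal.coe_eq_coe_iff] at hKL
        rw [hI, hm] at hKL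
        have hg0 : ∫ x, (q x * Real.log (q x / tiltD p s β Z x)
            - (q x - tiltD p s β Z x)) ∂μ = 0 := by linarith
        have hgz := (integral_eq_zero_iff_of_nonneg_ae hg_nn hg_int).mp hg0
        have h2 := (KL_g_zero_iff hp hq hqp hZpos).mp hgz
        filter_upwards [h2] with x hx hpx
        exact hx hpx
      · exact absurd hKL.symm (EReal.coe_ne_top _)
    · intro hqr
      have hcomb : ∀ᵐ x ∂μ, (p x = 0 → q x = 0) ∧ (p x ≠ 0 → q x = tiltD p s β Z x) := by
        filter_upwards [hqp, hqr] with x h1 h2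
        exact ⟨h1, fun h => h2 h⟩
      have heq := KL_qlog_eq hp hZpos hcomb
      have hq_int : Integrable q μ := KL_integrable_of_prob hq
      have hC1 : Integrable (fun x => β * (s x * q x)) μ := hsq.const_mul β
      have hC2 : Integrable (fun x => Real.log Z * q x) μ := hq_int.const_mul _
      have hC : Integrable (fun x => β * (s x * q x) - Real.log Z * q x) μ := hC1.sub hC2
      have hint : Integrable (fun x => q x * Real.log (q x / p x)) μ := hC.congr heq.symm
      unfold KLd
      rw [if_pos ⟨hqp, hint⟩, EReal.coe_eq_coe_iff,
        integral_congr_ae heq,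
        integral_sub hC1 hC2,
        integral_const_mul, integral_const_mul, hm, hq.2.2]
      ring
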